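/- Let p, q ≥ 1 be coprime integers and let (r₁, r₂) be the unique positive reals with r₁^p = r₂^q and r₁² + r₂² = 1. Then {(u, v) ∈ ℂ² : |u|² + |v|² = 1 and u^p = v^q} = {(r₁·e^{iqθ}, r₂·e^{ipθ}) : θ ∈ ℝ}. -/

import Mathlib

open Complex Real

lemma uniq_pair (p q : ℕ) (hp : p ≠ 0) (hq : q ≠ 0)
    (r₁ r₂ s₁ s₂ : ℝ) (hr₁ : 0 < r₁) (hr₂ : 0 < r₂) (hs₁ : 0 < s₁) (hs₂ : 0 < s₂)
    (h1 : r₁ ^ p = r₂ ^ q) (h2 : r₁ ^ 2 + r₂ ^ 2 = 1)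
    (h3 : s₁ ^ p = s₂ ^ q) (h4 : s₁ ^ 2 + s₂ ^ 2 = 1) : s₁ = r₁ ∧ s₂ = r₂ := by
  rcases lt_trichotomy s₁ r₁ with h | h | h
  · exfalso
    have hpp : s₁ ^ p < r₁ ^ p := pow_lt_pow_left₀ h hs₁.le hp
    have hqq : s₂ ^ q < r₂ ^ q := by rw [← h3, ← h1]; exact hpp
    have h5 : s₂ < r₂ := lt_of_pow_lt_pow_left₀ q hr₂.le hqq
    have : s₁ ^ 2 < r₁ ^ 2 := pow_lt_pow_left₀ h hs₁.le two_ne_zero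
    have : s₂ ^ 2 < r₂ ^ 2 := pow_lt_pow_left₀ h5 hs₂.le two_ne_zero
    linarith
  · have h5 : s₂ ^ 2 = r₂ ^ 2 := by nlinarith
    exact ⟨h, pow_left_inj₀ hs₂.le hr₂.le two_ne_zero |>.mp h5 |>.symm ▸ rfl⟩
  · exfalso
    have hpp : r₁ ^ p < s₁ ^ p := pow_lt_pow_left₀ h hr₁.le hp
    have hqq : r₂ ^ q < s₂ ^ q := by rw [← h3, ← h1]; exact hpp
    have h5 : r₂ < s₂ := lt_of_pow_lt_pow_left₀ q hs₂.le hqq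
    have : r₁ ^ 2 < s₁ ^ 2 := pow_lt_pow_left₀ h hr₁.le two_ne_zero
    have : r₂ ^ 2 < s₂ ^ 2 := pow_lt_pow_left₀ h5 hr₂.le two_ne_zero
    linarith

theorem stmt_14 (p q : ℕ) (hp : 1 ≤ p) (hq : 1 ≤ q) (hcop : Nat.Coprime p q)
    (r₁ r₂ : ℝ) (hr₁ : 0 < r₁) (hr₂ : 0 < r₂)
    (hpq : r₁ ^ p = r₂ ^ q) (hsum : r₁ ^ 2 + r₂ ^ 2 = 1) :
    {uv : ℂ × ℂ | ‖uv.1‖ ^ 2 + ‖uv.2‖ ^ 2 = 1 ∧ uv.1 ^ p = uv.2 ^ q} =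
    {uv : ℂ × ℂ | ∃ θ : ℝ,
      uv = ((r₁ : ℂ) * Complex.exp (Complex.I * (q : ℂ) * (θ : ℂ)),
            (r₂ : ℂ) * Complex.exp (Complex.I * (p : ℂ) * (θ : ℂ)))} := by
  have hp0 : p ≠ 0 := by omega
  have hq0 : q ≠ 0 := by omega
  ext ⟨u, v⟩
  simp only [Set.mem_setOf_eq]
  constructor
  · rintro ⟨habs, heq⟩
    -- u, v ≠ 0
    have hu : u ≠ 0 := by
      rintro rfl
      have : v = 0 := by
        have : v ^ q = 0 := by rw [← heq]; simp [hp0]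
        exact pow_eq_zero_iff hq0 |>.mp this
      subst this
      simp at habs
    have hv : v ≠ 0 := by
      rintro rfl
      have : u = 0 := by
        have : u ^ p = 0 := by rw [heq]; simp [hq0]
        exact pow_eq_zero_iff hp0 |>.mp this
      subst this
      simp at habs
    have hau : 0 < ‖u‖ := norm_pos_iff.mpr hu
    have hav : 0 < ‖v‖ := norm_pos_iff.mpr hv
    have habspow : ‖u‖ ^ p = ‖v‖ ^ q := by
      rw [← norm_pow, ← norm_pow, heq]
    obtain ⟨hsu, hsv⟩ := uniq_pair p q hp0 hq0 r₁ r₂ (‖u‖) (‖v‖)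
      hr₁ hr₂ hau hav hpq hsum habspow habs
    set α := u.arg with hα
    set β := v.arg with hβ
    have hueq : u = (r₁ : ℂ) * Complex.exp (α * Complex.I) := by
      rw [← hsu]; exact (Complex.norm_mul_exp_arg_mul_I u).symm
    have hveq : v = (r₂ : ℂ) * Complex.exp (β * Complex.I) := by
      rw [← hsv]; exact (Complex.norm_mul_exp_arg_mul_I v).symm
    -- phase equation
    have hexp : Complex.exp (p * α * Complex.I) = Complex.exp (q * β * Complex.I) := by
      have h1 : ((r₁ : ℂ)) ^ p * Complex.exp (p * α * Complex.I)
          = ((r₂ : ℂ)) ^ q * Complex.exp (q * β * Complex.I) := by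
        have := heq
        rw [hueq, hveq, mul_pow, mul_pow, ← Complex.exp_nat_mul, ← Complex.exp_nat_mul] at this
        convert this using 3 <;> ring
      have hr : ((r₁ : ℂ)) ^ p = ((r₂ : ℂ)) ^ q := by exact_mod_cast hpq
      rw [hr] at h1
      have hne : ((r₂ : ℂ)) ^ q ≠ 0 := pow_ne_zero _ (by exact_mod_cast hr₂.ne')
      exact mul_left_cancel₀ hne h1
    rw [Complex.exp_eq_exp_iff_exists_int] at hexp
    obtain ⟨n, hn⟩ := hexp
    have hreal : (p : ℝ) * α = q * β + n * (2 * π) := by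
      have := congrArg Complex.im hn
      simpa using this
    -- Bezout
    have hicop : IsCoprime (p : ℤ) (q : ℤ) := Int.isCoprime_iff_gcd_eq_one.mpr (by exact_mod_cast hcop)
    obtain ⟨a, b, hab⟩ := hicop
    refine ⟨b * α + a * β, ?_⟩
    have hqθ : (q : ℝ) * (b * α + a * β) = α + (-(a * n)) * (2 * π) := by
      have hb : (b : ℝ) * q = 1 - a * p := by
        have : (a : ℝ) * p + b * q = 1 := by exact_mod_cast hab
        linarith
      linear_combination α * hb - (a : ℝ) * hreal
    have hpθ : (p : ℝ) * (b * α + a * β) = β + (b * n) * (2 * π) := by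
      have ha : (a : ℝ) * p = 1 - b * q := by
        have : (a : ℝ) * p + b * q = 1 := by exact_mod_cast hab
        linarith
      linear_combination β * ha + (b : ℝ) * hreal
    have e1 : Complex.exp (Complex.I * (q : ℂ) * ((b * α + a * β : ℝ) : ℂ))
        = Complex.exp (α * Complex.I) := by
      have : Complex.I * (q : ℂ) * ((b * α + a * β : ℝ) : ℂ)
          = α * Complex.I + (-(a * n) : ℤ) * (2 * π * Complex.I) := by
        have := hqθ
        push_cast
        push_cast at this
        rw [show (Complex.I * q * (b * α + a * β) : ℂ) = (q * (b * α + a * β) : ℂ) * Complex.I by ring]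
        rw [show ((q : ℂ) * (b * α + a * β)) = ((q * (b * α + a * β) : ℝ) : ℂ) by push_cast; ring]
        rw_mod_cast [this]
        push_cast
        ring
      rw [this, Complex.exp_add, Complex.exp_int_mul_two_pi_mul_I, mul_one]
    have e2 : Complex.exp (Complex.I * (p : ℂ) * ((b * α + a * β : ℝ) : ℂ))
        = Complex.exp (β * Complex.I) := by
      have : Complex.I * (p : ℂ) * ((b * α + a * β : ℝ) : ℂ)
          = β * Complex.I + ((b * n) : ℤ) * (2 * π * Complex.I) := by
        have := hpθ
        push_cast
        push_cast at this
        rw [show (Complex.I * p * (b * α + a * β) : ℂ) = (p * (b * α + a * β) : ℂ) * Complex.I by ring]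
        rw [show ((p : ℂ) * (b * α + a * β)) = ((p * (b * α + a * β) : ℝ) : ℂ) by push_cast; ring]
        rw_mod_cast [this]
        push_cast
        ring
      rw [this, Complex.exp_add, Complex.exp_int_mul_two_pi_mul_I, mul_one]
    rw [Prod.ext_iff]
    constructor
    · simp only
      rw [e1, hueq]
    · simp only
      rw [e2, hveq]
  · rintro ⟨θ, huv⟩
    rw [Prod.ext_iff] at huv
    obtain ⟨h1, h2⟩ := huv
    simp only at h1 h2
    constructor
    · rw [h1, h2, norm_mul, norm_mul, Complex.norm_exp, Complex.norm_exp]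
      have hre1 : (Complex.I * (q : ℂ) * (θ : ℂ)).re = 0 := by simp [Complex.mul_re]
      have hre2 : (Complex.I * (p : ℂ) * (θ : ℂ)).re = 0 := by simp [Complex.mul_re]
      rw [hre1, hre2, Real.exp_zero, mul_one, mul_one,
        Complex.norm_real, Complex.norm_real, Real.norm_eq_abs, Real.norm_eq_abs, abs_of_pos hr₁, abs_of_pos hr₂, hsum]
    · rw [h1, h2, mul_pow, mul_pow, ← Complex.exp_nat_mul, ← Complex.exp_nat_mul]
      have : ((r₁ : ℂ)) ^ p = ((r₂ : ℂ)) ^ q := by exact_mod_cast hpq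
      rw [this]
      congr 1
      push_cast
      ring
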